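/- arXiv:2406.00493 — 7 statements merged into one kernel-verified Lean document; each statement's English description precedes it below -/
import Mathlib

section
/- Under the stated conditions, the coordinates of β^ω on A satisfy β^ω_A = β̂_A − ξ^ω · (X_AᵀX_A)⁻¹ x_{kA} (y_k − ŷ_k). -/
open Matrix

/-- Case-weight adjusted Lasso solution on the active set:
`β^ω_A = β̂_A - ξ^ω (X_AᵀX_A)⁻¹ x_{kA} (y_k - ŷ_k)`. -/
theorem stmt7 {n p : ℕ} (hn : 0 < n) (hp : 0 < p)
    (X : Matrix (Fin n) (Fin p) ℝ) (y : Fin n → ℝ)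
    (lam : ℝ) (hlam : 0 < lam) (k : Fin n) (ω : ℝ) (hω : ω ∈ Set.Icc (0:ℝ) 1)
    (hcent : ∀ j, ∑ i, X i j = 0)
    (A : Finset (Fin p))
    (XA : Matrix (Fin n) {j // j ∈ A} ℝ)
    (hXA : ∀ i (j : {j // j ∈ A}), XA i j = X i j.1)
    (hinv : IsUnit (XAᵀ * XA).det)
    (sA : {j // j ∈ A} → ℝ) (hsA : ∀ j, sA j = 1 ∨ sA j = -1)
    (betahat : {j // j ∈ A} → ℝ)
    (hbetahat : betahat = (XAᵀ * XA)⁻¹.mulVec (XAᵀ.mulVec y - lam • sA))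
    (beta0hat : ℝ) (hbeta0hat : beta0hat = (∑ i, y i) / n)
    (yhat : Fin n → ℝ) (hyhat : ∀ i, yhat i = beta0hat + ∑ j, XA i j * betahat j)
    (Xt : Matrix (Fin n) (Fin 1 ⊕ {j // j ∈ A}) ℝ)
    (hXt : Xt = Matrix.fromCols (Matrix.of fun _ (_ : Fin 1) => (1:ℝ)) XA)
    (H : Matrix (Fin n) (Fin n) ℝ) (hH : H = Xt * (Xtᵀ * Xt)⁻¹ * Xtᵀ)
    (hden : 1 - (1 - ω) * H k k ≠ 0) (hnω : (n : ℝ) - 1 + ω ≠ 0)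
    (ξ : ℝ) (hξ : ξ = (1 - ω) / (1 - (1 - ω) * H k k))
    (β0ω : ℝ) (βω : Fin p → ℝ)
    (hzero : ∀ j ∉ A, βω j = 0)
    (hd0 : -(∑ i, (y i - β0ω - ∑ j, X i j * βω j))
        + (1 - ω) * (y k - β0ω - ∑ j, X k j * βω j) = 0)
    (hdA : ∀ j : {j // j ∈ A},
        -(∑ i, X i j.1 * (y i - β0ω - ∑ j', X i j' * βω j'))
          + (1 - ω) * X k j.1 * (y k - β0ω - ∑ j', X k j' * βω j') = -lam * sA j) :
    ∀ j : {j // j ∈ A},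
      βω j.1 = betahat j
        - ξ * ((XAᵀ * XA)⁻¹.mulVec (fun j' : {j // j ∈ A} => X k j'.1)) j
            * (y k - yhat k) := by

  have hn0 : (n:ℝ) ≠ 0 := Nat.cast_ne_zero.mpr hn.ne'
  set G := XAᵀ * XA with hGdef
  have hG1 : G⁻¹ * G = 1 := Matrix.nonsing_inv_mul _ hinv
  set rω : ℝ := y k - β0ω - ∑ j', X k j' * βω j' with hr
  set xkA : {j // j ∈ A} → ℝ := fun j' => X k j'.1 with hxkA
  set v : {j // j ∈ A} → ℝ := fun j' => βω j'.1 with hv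
  -- rewrite sums over all p as sums over A
  have hsum : ∀ i, ∑ j', X i j' * βω j' = ∑ j', XA i j' * v j' := by
    intro i
    have h0 : ∑ j' : Fin p, X i j' * βω j' = ∑ j' ∈ A, X i j' * βω j' :=
      (Finset.sum_subset (Finset.subset_univ A)
        (fun x _ hx => by rw [hzero x hx, mul_zero])).symm
    rw [h0, ← Finset.sum_coe_sort A (fun j' => X i j' * βω j')]
    exact Finset.sum_congr rfl fun j' _ => by rw [hXA]
  -- centering of XA columns
  have hcentA : ∀ j' : {j // j ∈ A}, ∑ i, XA i j' = 0 := by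
    intro j'
    simp only [hXA]
    exact hcent j'.1
  -- step 1: intercept equation
  have hb0 : (n:ℝ) * β0ω = (∑ i, y i) - (1 - ω) * rω := by
    have h1 : ∑ i, (y i - β0ω - ∑ j', X i j' * βω j')
        = (∑ i, y i) - n * β0ω := by
      simp only [hsum]
      rw [Finset.sum_sub_distrib, Finset.sum_sub_distrib, Finset.sum_const,
        Finset.sum_comm]
      simp only [← Finset.sum_mul, hcentA]
      simp [mul_comm]
    rw [h1] at hd0
    rw [hsum] at hr
    linarith [hd0]
  -- step 2: active-set equation
  have hGv : ∀ j' : {j // j ∈ A}, G.mulVec v j'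
      = XAᵀ.mulVec y j' - lam * sA j' - (1 - ω) * rω * xkA j' := by
    intro j
    have h2 := hdA j
    have hL : ∑ i, X i j.1 * (y i - β0ω - ∑ j', X i j' * βω j')
        = XAᵀ.mulVec y j - G.mulVec v j := by
      have hXAk : ∀ i, X i j.1 = XA i j := fun i => (hXA i j).symm
      have hA : (XAᵀ.mulVec y) j = ∑ i, XA i j * y i := by
        simp [Matrix.mulVec, dotProduct, Matrix.transpose_apply, mul_comm]
      have hB : (G.mulVec v) j = ∑ i, XA i j * ∑ j', XA i j' * v j' := by
        simp only [Matrix.mulVec, dotProduct, hGdef, Matrix.mul_apply,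
          Matrix.transpose_apply, Finset.sum_mul]
        rw [Finset.sum_comm]
        refine Finset.sum_congr rfl fun i _ => ?_
        rw [Finset.mul_sum]
        exact Finset.sum_congr rfl fun j' _ => by ring
      simp only [hsum, hXAk]
      have hexp : ∀ i, XA i j * (y i - β0ω - ∑ j', XA i j' * v j')
          = XA i j * y i - β0ω * XA i j - XA i j * ∑ j', XA i j' * v j' := by
        intro i; ring
      simp only [hexp]
      rw [Finset.sum_sub_distrib, Finset.sum_sub_distrib, ← Finset.mul_sum, hcentA,
        mul_zero, sub_zero, hA, hB]
    rw [hL] at h2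
    show (G.mulVec v) j = (XAᵀ.mulVec y) j - lam * sA j - (1 - ω) * rω * (X k j.1)
    linear_combination h2
  -- step 3: solve for v
  have hGiv : ∀ j' : {j // j ∈ A},
      v j' = betahat j' - (1 - ω) * rω * (G⁻¹.mulVec xkA) j' := by
    have h3 : G.mulVec v = XAᵀ.mulVec y - lam • sA - ((1 - ω) * rω) • xkA := by
      funext j'
      rw [hGv j']
      simp only [Pi.sub_apply, Pi.smul_apply, smul_eq_mul]
    have h4 : v = betahat - ((1 - ω) * rω) • G⁻¹.mulVec xkA := by
      calc v = G⁻¹.mulVec (G.mulVec v) := by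
              rw [Matrix.mulVec_mulVec, hG1, Matrix.one_mulVec]
        _ = betahat - ((1 - ω) * rω) • G⁻¹.mulVec xkA := by
              rw [h3, Matrix.mulVec_sub, Matrix.mulVec_smul, ← hbetahat]
    intro j'
    rw [h4]
    simp [smul_eq_mul]
  -- step 4: hat matrix diagonal
  have hM : Xtᵀ * Xt
      = Matrix.fromBlocks (Matrix.of fun (_ _ : Fin 1) => (n:ℝ)) 0 0 G := by
    rw [hXt, Matrix.transpose_fromCols, Matrix.fromRows_mul_fromCols]
    have e11 : ((Matrix.of fun _ (_ : Fin 1) => (1:ℝ)) : Matrix (Fin n) (Fin 1) ℝ)ᵀ *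
        ((Matrix.of fun _ (_ : Fin 1) => (1:ℝ)) : Matrix (Fin n) (Fin 1) ℝ)
        = Matrix.of fun (_ _ : Fin 1) => (n:ℝ) := by
      ext i j
      simp [Matrix.mul_apply]
    have e12 : ((Matrix.of fun _ (_ : Fin 1) => (1:ℝ)) : Matrix (Fin n) (Fin 1) ℝ)ᵀ * XA
        = 0 := by
      ext i j
      simp [Matrix.mul_apply, hcentA j]
    have e21 : XAᵀ * ((Matrix.of fun _ (_ : Fin 1) => (1:ℝ)) : Matrix (Fin n) (Fin 1) ℝ)
        = 0 := by
      ext i j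
      simp [Matrix.mul_apply, Matrix.transpose_apply, hcentA i]
    rw [e11, e12, e21, hGdef]
  have hMinv : (Xtᵀ * Xt)⁻¹
      = Matrix.fromBlocks (Matrix.of fun (_ _ : Fin 1) => (n:ℝ)⁻¹) 0 0 G⁻¹ := by
    apply Matrix.inv_eq_left_inv
    rw [hM, Matrix.fromBlocks_multiply]
    have hN : (Matrix.of fun (_ _ : Fin 1) => (n:ℝ)⁻¹) *
        (Matrix.of fun (_ _ : Fin 1) => (n:ℝ)) = 1 := by
      ext i j
      fin_cases i; fin_cases j
      simp [Matrix.mul_apply, inv_mul_cancel₀ hn0]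
    simp only [Matrix.mul_zero, Matrix.zero_mul, Matrix.mul_one, Matrix.one_mul,
      add_zero, zero_add, hN, hG1]
    exact Matrix.fromBlocks_one
  have hHkk : H k k = (n:ℝ)⁻¹ + ∑ j', xkA j' * (G⁻¹.mulVec xkA) j' := by
    rw [hH, hMinv, hXt, Matrix.fromCols_mul_fromBlocks,
      Matrix.transpose_fromCols, Matrix.fromCols_mul_fromRows]
    simp only [Matrix.add_apply, Matrix.mul_apply, Matrix.transpose_apply,
      Matrix.of_apply, Matrix.mulVec, dotProduct]
    congr 1
    · simp
    · simp only [Matrix.zero_apply, mul_zero, Finset.sum_const_zero, zero_add,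
        Finset.sum_mul, Finset.mul_sum]
      rw [Finset.sum_comm]
      refine Finset.sum_congr rfl fun a _ => Finset.sum_congr rfl fun b _ => ?_
      simp only [hxkA, ← hXA]
      ring
  -- step 5: scalar relation
  have hyhk : yhat k = (∑ i, y i) / n + ∑ j', xkA j' * betahat j' := by
    rw [hyhat, hbeta0hat]
    congr 1
    exact Finset.sum_congr rfl fun j' _ => by rw [hXA]
  have hrk : rω * (1 - (1 - ω) * H k k) = y k - yhat k := by
    have hxv : ∑ j', X k j' * βω j' = ∑ j', xkA j' * v j' := by
      rw [hsum k]
      exact Finset.sum_congr rfl fun j' _ => by rw [hXA]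
    have hq : ∑ j', xkA j' * v j'
        = ∑ j', xkA j' * betahat j'
          - (1 - ω) * rω * ∑ j', xkA j' * (G⁻¹.mulVec xkA) j' := by
      simp only [hGiv]
      rw [Finset.mul_sum, ← Finset.sum_sub_distrib]
      exact Finset.sum_congr rfl fun j' _ => by ring
    have hrω : rω = y k - β0ω - ∑ j', xkA j' * v j' := by rw [hr, hxv]
    have hb0' : β0ω = (∑ i, y i) / n - (1 - ω) * rω / n := by
      field_simp at hb0 ⊢
      linarith [hb0]
    rw [hHkk, hyhk]
    rw [hq, hb0'] at hrω
    have hfrac : (1 - ω) * rω / n = (1 - ω) * rω * (n:ℝ)⁻¹ := by ring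
    rw [hfrac] at hrω
    nlinarith [hrω]
  -- conclude
  intro j
  have hrval : (1 - ω) * rω = ξ * (y k - yhat k) := by
    rw [hξ, ← hrk]
    field_simp
  have := hGiv j
  rw [hv] at this
  simp only at this
  rw [this]
  have : (1 - ω) * rω * (G⁻¹.mulVec xkA) j
      = ξ * (G⁻¹.mulVec xkA) j * (y k - yhat k) := by
    rw [hrval]; ring
  rw [hxkA] at this ⊢
  linarith [this]
end

section
/- Under the stated conditions, the intercept satisfies β₀^ω = β̂₀ − ξ^ω (y_k − ŷ_k)/n. -/
open Matrix

/-- Case-weight adjusted Lasso intercept: `β₀^ω = β̂₀ - ξ^ω (y_k - ŷ_k)/n`. -/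
theorem stmt8 {n p : ℕ} (hn : 0 < n) (hp : 0 < p)
    (X : Matrix (Fin n) (Fin p) ℝ) (y : Fin n → ℝ)
    (lam : ℝ) (hlam : 0 < lam) (k : Fin n) (ω : ℝ) (hω : ω ∈ Set.Icc (0:ℝ) 1)
    (hcent : ∀ j, ∑ i, X i j = 0)
    (A : Finset (Fin p))
    (XA : Matrix (Fin n) {j // j ∈ A} ℝ)
    (hXA : ∀ i (j : {j // j ∈ A}), XA i j = X i j.1)
    (hinv : IsUnit (XAᵀ * XA).det)
    (sA : {j // j ∈ A} → ℝ) (hsA : ∀ j, sA j = 1 ∨ sA j = -1)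
    (betahat : {j // j ∈ A} → ℝ)
    (hbetahat : betahat = (XAᵀ * XA)⁻¹.mulVec (XAᵀ.mulVec y - lam • sA))
    (beta0hat : ℝ) (hbeta0hat : beta0hat = (∑ i, y i) / n)
    (yhat : Fin n → ℝ) (hyhat : ∀ i, yhat i = beta0hat + ∑ j, XA i j * betahat j)
    (Xt : Matrix (Fin n) (Fin 1 ⊕ {j // j ∈ A}) ℝ)
    (hXt : Xt = Matrix.fromCols (Matrix.of fun _ (_ : Fin 1) => (1:ℝ)) XA)
    (H : Matrix (Fin n) (Fin n) ℝ) (hH : H = Xt * (Xtᵀ * Xt)⁻¹ * Xtᵀ)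
    (hden : 1 - (1 - ω) * H k k ≠ 0) (hnω : (n : ℝ) - 1 + ω ≠ 0)
    (ξ : ℝ) (hξ : ξ = (1 - ω) / (1 - (1 - ω) * H k k))
    (β0ω : ℝ) (βω : Fin p → ℝ)
    (hzero : ∀ j ∉ A, βω j = 0)
    (hd0 : -(∑ i, (y i - β0ω - ∑ j, X i j * βω j))
        + (1 - ω) * (y k - β0ω - ∑ j, X k j * βω j) = 0)
    (hdA : ∀ j : {j // j ∈ A},
        -(∑ i, X i j.1 * (y i - β0ω - ∑ j', X i j' * βω j'))
          + (1 - ω) * X k j.1 * (y k - β0ω - ∑ j', X k j' * βω j') = -lam * sA j) :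
    β0ω = beta0hat - ξ * (y k - yhat k) / n := by
  have hn' : (n:ℝ) ≠ 0 := Nat.cast_ne_zero.mpr hn.ne'
  set G := XAᵀ * XA with hGdef
  set βA : {j // j ∈ A} → ℝ := fun j => βω j.1 with hβAdef
  set rk : ℝ := y k - β0ω - ∑ j, X k j * βω j with hrkdef
  -- sum conversion
  have hsum : ∀ i, ∑ j, X i j * βω j = ∑ j, XA i j * βA j := by
    intro i
    have h1 : ∑ j, X i j * βω j = ∑ j ∈ A, X i j * βω j := by
      refine (Finset.sum_subset A.subset_univ fun j _ hj => ?_).symm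
      rw [hzero j hj, mul_zero]
    rw [h1, ← Finset.sum_coe_sort A (fun j => X i j * βω j)]
    exact Finset.sum_congr rfl fun j _ => by rw [hXA]
  have hcentA : ∀ j : {j // j ∈ A}, ∑ i, XA i j = 0 := by
    intro j
    simp only [hXA]; exact hcent j.1
  -- step 1: intercept
  have hXb0 : ∑ i, ∑ j, X i j * βω j = 0 := by
    rw [Finset.sum_comm]
    refine Finset.sum_eq_zero fun j _ => ?_
    rw [← Finset.sum_mul, hcent j, zero_mul]
  have hsumres : ∑ i, (y i - β0ω - ∑ j, X i j * βω j) = (∑ i, y i) - n * β0ω := by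
    rw [Finset.sum_sub_distrib, Finset.sum_sub_distrib, hXb0, sub_zero,
      Finset.sum_const, Finset.card_univ, Fintype.card_fin, nsmul_eq_mul]
  have h1 : (n:ℝ) * β0ω = (∑ i, y i) - (1-ω) * rk := by
    rw [hsumres] at hd0; linarith
  have hβ0 : β0ω = beta0hat - (1-ω) * rk / n := by
    rw [hbeta0hat]; field_simp; linarith
  -- step 2: A-equations
  have hGmv : ∀ j, G.mulVec βA j = ∑ i, XA i j * ∑ j', XA i j' * βA j' := by
    intro j
    simp only [Matrix.mulVec, dotProduct, Matrix.mul_apply, hGdef,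
      Matrix.transpose_apply, Finset.sum_mul]
    rw [Finset.sum_comm]
    exact Finset.sum_congr rfl fun i _ => by rw [Finset.mul_sum]; exact Finset.sum_congr rfl fun j' _ => by ring
  have hGv : ∀ j, G.mulVec βA j = XAᵀ.mulVec y j - lam * sA j - ((1-ω) * rk) * XA k j := by
    intro j
    have e1 : ∑ i, X i j.1 * (y i - β0ω - ∑ j', X i j' * βω j')
        = (∑ i, XA i j * y i) - (∑ i, XA i j) * β0ω - G.mulVec βA j := by
      rw [hGmv j, Finset.sum_mul, ← Finset.sum_sub_distrib, ← Finset.sum_sub_distrib]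
      refine Finset.sum_congr rfl fun i _ => ?_
      rw [hsum i, hXA]; ring
    have e2 := hdA j
    rw [e1, hcentA j, zero_mul, sub_zero] at e2
    have e3 : XAᵀ.mulVec y j = ∑ i, XA i j * y i := by
      simp only [Matrix.mulVec, dotProduct, Matrix.transpose_apply]
    rw [e3, hXA k j]
    have : (1 - ω) * X k j.1 * (y k - β0ω - ∑ j', X k j' * βω j') = (1-ω) * X k j.1 * rk := by
      rw [hrkdef]
    rw [this] at e2
    linarith
  -- step 3: βA in terms of betahat
  set w : {j // j ∈ A} → ℝ := G⁻¹.mulVec (fun j => XA k j) with hw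
  have hβAeq : βA = betahat - ((1-ω) * rk) • w := by
    have h2 : G⁻¹.mulVec (G.mulVec βA) = βA := by
      rw [Matrix.mulVec_mulVec, Matrix.nonsing_inv_mul _ hinv, Matrix.one_mulVec]
    have key : G.mulVec βA = (XAᵀ.mulVec y - lam • sA) - ((1-ω) * rk) • (fun j => XA k j) := by
      funext j
      simpa [sub_sub, mul_comm, mul_assoc, mul_left_comm] using hGv j
    rw [← h2, key, Matrix.mulVec_sub, hbetahat, hw, Matrix.mulVec_smul]
  set q : ℝ := ∑ j, XA k j * w j with hq
  have hdot : ∑ j, XA k j * βA j = (∑ j, XA k j * betahat j) - (1-ω) * rk * q := by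
    rw [hβAeq, hq, Finset.mul_sum, ← Finset.sum_sub_distrib]
    refine Finset.sum_congr rfl fun j _ => ?_
    simp only [Pi.sub_apply, Pi.smul_apply, smul_eq_mul]; ring
  -- step 5: H k k
  have hXtXt : Xtᵀ * Xt = fromBlocks ((n:ℝ) • 1) 0 0 G := by
    rw [hXt, transpose_fromCols, fromRows_mul_fromCols]
    have b11 : (Matrix.of fun (_ : Fin n) (_ : Fin 1) => (1:ℝ))ᵀ * (Matrix.of fun (_ : Fin n) (_ : Fin 1) => (1:ℝ))
        = (n:ℝ) • (1 : Matrix (Fin 1) (Fin 1) ℝ) := by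
      ext i j
      fin_cases i; fin_cases j
      simp [Matrix.mul_apply, Matrix.one_apply]
    have b12 : (Matrix.of fun (_ : Fin n) (_ : Fin 1) => (1:ℝ))ᵀ * XA = 0 := by
      ext i j
      simp [Matrix.mul_apply, hcentA j]
    have b21 : XAᵀ * (Matrix.of fun (_ : Fin n) (_ : Fin 1) => (1:ℝ)) = 0 := by
      ext i j
      simp [Matrix.mul_apply, hcentA i]
    rw [b11, b12, b21]
  have hMinv : (Xtᵀ * Xt)⁻¹ = fromBlocks ((n:ℝ)⁻¹ • 1) 0 0 G⁻¹ := by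
    apply inv_eq_right_inv
    rw [hXtXt, Matrix.fromBlocks_multiply]
    rw [Matrix.mul_nonsing_inv _ hinv]
    simp [smul_smul, hn', ← Matrix.fromBlocks_one]
  have hHkk : H k k = (n:ℝ)⁻¹ + q := by
    rw [hH, hMinv, hXt, transpose_fromCols, fromCols_mul_fromBlocks,
      fromCols_mul_fromRows]
    have e : (XA * G⁻¹ * XAᵀ) k k = q := by
      rw [hq]
      simp only [Matrix.mul_apply, Matrix.transpose_apply, hw, Matrix.mulVec, dotProduct,
        Finset.sum_mul, Finset.mul_sum]
      rw [Finset.sum_comm]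
      refine Finset.sum_congr rfl fun j _ => Finset.sum_congr rfl fun j' _ => by ring
    simp only [Matrix.add_apply, Matrix.mul_zero, Matrix.zero_mul, Matrix.add_mul]
    rw [e]
    simp [Matrix.mul_apply, Matrix.one_apply]
  -- step 6: conclude
  have hrkA : rk = y k - β0ω - ∑ j, XA k j * βA j := by rw [hrkdef, hsum k]
  have hrkeq : rk * (1 - (1-ω) * H k k) = y k - yhat k := by
    rw [hHkk, hyhat k]
    rw [hdot, hβ0] at hrkA
    have hninv : (1-ω) * rk / (n:ℝ) = (1-ω) * rk * (n:ℝ)⁻¹ := by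
      rw [div_eq_mul_inv]
    rw [hninv] at hrkA
    ring_nf
    ring_nf at hrkA
    linarith
  have hrkval : rk = (y k - yhat k) / (1 - (1-ω) * H k k) := (eq_div_iff hden).mpr hrkeq
  rw [hβ0, hξ, hrkval]
  ring
end

section
/- Under the stated conditions, the fitted value vector ŷ^ω := β₀^ω 1ₙ + X β^ω satisfies ŷ^ω = ŷ − ξ^ω · h_{·k} (y_k − ŷ_k). -/
open Matrix

/-- Case-weight adjusted Lasso fitted values: `ŷ^ω = ŷ - ξ^ω h_{·k} (y_k - ŷ_k)`. -/
theorem stmt9 {n p : ℕ} (hn : 0 < n) (hp : 0 < p)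
    (X : Matrix (Fin n) (Fin p) ℝ) (y : Fin n → ℝ)
    (lam : ℝ) (hlam : 0 < lam) (k : Fin n) (ω : ℝ) (hω : ω ∈ Set.Icc (0:ℝ) 1)
    (hcent : ∀ j, ∑ i, X i j = 0)
    (A : Finset (Fin p))
    (XA : Matrix (Fin n) {j // j ∈ A} ℝ)
    (hXA : ∀ i (j : {j // j ∈ A}), XA i j = X i j.1)
    (hinv : IsUnit (XAᵀ * XA).det)
    (sA : {j // j ∈ A} → ℝ) (hsA : ∀ j, sA j = 1 ∨ sA j = -1)
    (betahat : {j // j ∈ A} → ℝ)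
    (hbetahat : betahat = (XAᵀ * XA)⁻¹.mulVec (XAᵀ.mulVec y - lam • sA))
    (beta0hat : ℝ) (hbeta0hat : beta0hat = (∑ i, y i) / n)
    (yhat : Fin n → ℝ) (hyhat : ∀ i, yhat i = beta0hat + ∑ j, XA i j * betahat j)
    (Xt : Matrix (Fin n) (Fin 1 ⊕ {j // j ∈ A}) ℝ)
    (hXt : Xt = Matrix.fromCols (Matrix.of fun _ (_ : Fin 1) => (1:ℝ)) XA)
    (H : Matrix (Fin n) (Fin n) ℝ) (hH : H = Xt * (Xtᵀ * Xt)⁻¹ * Xtᵀ)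
    (hden : 1 - (1 - ω) * H k k ≠ 0) (hnω : (n : ℝ) - 1 + ω ≠ 0)
    (ξ : ℝ) (hξ : ξ = (1 - ω) / (1 - (1 - ω) * H k k))
    (β0ω : ℝ) (βω : Fin p → ℝ)
    (hzero : ∀ j ∉ A, βω j = 0)
    (hd0 : -(∑ i, (y i - β0ω - ∑ j, X i j * βω j))
        + (1 - ω) * (y k - β0ω - ∑ j, X k j * βω j) = 0)
    (hdA : ∀ j : {j // j ∈ A},
        -(∑ i, X i j.1 * (y i - β0ω - ∑ j', X i j' * βω j'))
          + (1 - ω) * X k j.1 * (y k - β0ω - ∑ j', X k j' * βω j') = -lam * sA j) :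
    ∀ i, β0ω + ∑ j, X i j * βω j = yhat i - ξ * H i k * (y k - yhat k) := by
  have hn' : (n:ℝ) ≠ 0 := Nat.cast_ne_zero.mpr hn.ne'
  have hcentA : ∀ j : {j // j ∈ A}, ∑ i, XA i j = 0 := by
    intro j; simp only [hXA]; exact hcent j.1
  -- restrict sums to A
  have sumA : ∀ i, (∑ j, X i j * βω j) = ∑ j : {j // j ∈ A}, XA i j * βω j.1 := by
    intro i
    have h1 : ∑ j : {j // j ∈ A}, XA i j * βω j.1 = ∑ j ∈ A, X i j * βω j := by
      rw [← Finset.sum_coe_sort A (fun j => X i j * βω j)]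
      exact Finset.sum_congr rfl fun j _ => by rw [hXA]
    rw [h1]
    exact (Finset.sum_subset (Finset.subset_univ A)
      (fun j _ hj => by rw [hzero j hj, mul_zero])).symm
  -- e, u, d
  set e : Fin n → ℝ := fun i => y i - β0ω - ∑ j, X i j * βω j with he
  set u : Fin n → ℝ := fun i => y i - yhat i with hu
  set d : Fin n → ℝ := fun i => yhat i - (β0ω + ∑ j, X i j * βω j) with hd
  have hed : ∀ i, d i = e i - u i := by intro i; simp [he, hu, hd]; ring
  have hsume : ∑ i, e i = (1 - ω) * e k := by
    simp only [he]; linarith [hd0]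
  have hsumyhat : ∑ i, yhat i = ∑ i, y i := by
    simp only [hyhat]
    rw [Finset.sum_add_distrib, Finset.sum_const, Finset.sum_comm]
    have h2 : ∑ j : {j // j ∈ A}, ∑ i, XA i j * betahat j = 0 := by
      refine Finset.sum_eq_zero fun j _ => ?_
      rw [← Finset.sum_mul, hcentA, zero_mul]
    rw [h2, add_zero, hbeta0hat, Finset.card_univ, Fintype.card_fin, nsmul_eq_mul]
    field_simp
  have hsumu : ∑ i, u i = 0 := by
    simp only [hu]; rw [Finset.sum_sub_distrib, hsumyhat, sub_self]
  have hXAe : ∀ j : {j // j ∈ A},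
      ∑ i, XA i j * e i = lam * sA j + (1 - ω) * XA k j * e k := by
    intro j
    have h := hdA j
    simp only [he, hXA]
    linarith [h]
  -- normal equations for betahat
  have hbetv : (XAᵀ * XA) *ᵥ betahat = XAᵀ *ᵥ y - lam • sA := by
    rw [hbetahat, mulVec_mulVec, mul_nonsing_inv _ hinv, one_mulVec]
  have hXAu : ∀ j : {j // j ∈ A}, ∑ i, XA i j * u i = lam * sA j := by
    intro j
    have h1 := congrFun hbetv j
    simp only [mulVec, dotProduct, mul_apply, transpose_apply, Pi.sub_apply,
      Pi.smul_apply, smul_eq_mul] at h1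
    have h2 : ∑ i, XA i j * yhat i = ∑ i, XA i j * y i - lam * sA j := by
      calc ∑ i, XA i j * yhat i
          = (∑ i, XA i j) * beta0hat
            + ∑ j', (∑ i, XA i j * XA i j') * betahat j' := by
            simp only [hyhat, mul_add, Finset.mul_sum, ← mul_assoc]
            rw [Finset.sum_add_distrib, Finset.sum_comm (γ := Fin n)]
            simp only [Finset.sum_mul]
        _ = ∑ i, XA i j * y i - lam * sA j := by
            rw [hcentA, zero_mul, zero_add, h1]
    simp only [hu, mul_sub]
    rw [Finset.sum_sub_distrib, h2]; ring
  -- Xtᵀ d is colinear with kth row of Xt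
  have hXtd : ∀ q, ∑ i, Xt i q * d i = ((1 - ω) * e k) * Xt k q := by
    intro q
    cases q with
    | inl a =>
      have h1 : ∀ i, Xt i (Sum.inl a) = 1 := by
        intro i; rw [hXt]; simp [Matrix.fromCols]
      simp only [h1, one_mul, mul_one]
      have : ∑ i, d i = ∑ i, e i - ∑ i, u i := by
        rw [← Finset.sum_sub_distrib]; exact Finset.sum_congr rfl fun i _ => hed i
      rw [this, hsume, hsumu, sub_zero]
    | inr j =>
      have h1 : ∀ i, Xt i (Sum.inr j) = XA i j := by
        intro i; rw [hXt]; simp [Matrix.fromCols]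
      simp only [h1]
      have : ∑ i, XA i j * d i = ∑ i, XA i j * e i - ∑ i, XA i j * u i := by
        rw [← Finset.sum_sub_distrib]
        exact Finset.sum_congr rfl fun i _ => by rw [hed i, mul_sub]
      rw [this, hXAe j, hXAu j]; ring
  have hXtdv : Xtᵀ *ᵥ d = fun q => ((1 - ω) * e k) * Xt k q := by
    funext q
    simp only [mulVec, dotProduct, transpose_apply]
    exact hXtd q
  -- d is in the column space of Xt
  set w : (Fin 1 ⊕ {j // j ∈ A}) → ℝ :=
    Sum.elim (fun _ => beta0hat - β0ω) (fun j => betahat j - βω j.1) with hw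
  have hdw : d = Xt *ᵥ w := by
    funext i
    simp only [mulVec, dotProduct, Fintype.sum_sum_type, hw, Sum.elim_inl, Sum.elim_inr]
    have h1 : ∀ a : Fin 1, Xt i (Sum.inl a) = 1 := by
      intro a; rw [hXt]; simp [Matrix.fromCols]
    have h2 : ∀ j, Xt i (Sum.inr j) = XA i j := by
      intro j; rw [hXt]; simp [Matrix.fromCols]
    simp only [h1, h2, one_mul, Finset.sum_const, Finset.card_univ, Fintype.card_fin,
      one_smul, mul_sub]
    rw [Finset.sum_sub_distrib]
    simp only [hd, hyhat i, sumA i]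
    ring
  -- invertibility of Xtᵀ * Xt
  have hMblock : Xtᵀ * Xt = Matrix.fromBlocks
      (Matrix.of fun _ _ => (n:ℝ)) 0 0 (XAᵀ * XA) := by
    ext q q'
    cases q with
    | inl a => cases q' with
      | inl b =>
        simp only [mul_apply, transpose_apply, fromBlocks_apply₁₁, Matrix.of_apply, hXt]
        simp [Matrix.fromCols]
      | inr j =>
        simp only [mul_apply, transpose_apply, fromBlocks_apply₁₂, Matrix.zero_apply, hXt]
        simp [Matrix.fromCols, hcentA j]
    | inr j => cases q' with
      | inl b =>
        simp only [mul_apply, transpose_apply, fromBlocks_apply₂₁, Matrix.zero_apply, hXt]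
        simp [Matrix.fromCols, hcentA j]
      | inr j' =>
        simp only [mul_apply, transpose_apply, fromBlocks_apply₂₂, hXt]
        simp [Matrix.fromCols, mul_apply]
  have hMdet : IsUnit (Xtᵀ * Xt).det := by
    rw [hMblock, Matrix.det_fromBlocks_zero₂₁]
    exact ((isUnit_iff_ne_zero.mpr (by simpa [Matrix.det_fin_one] using hn')).mul hinv)
  have hinvM : (Xtᵀ * Xt)⁻¹ * (Xtᵀ * Xt) = 1 := nonsing_inv_mul _ hMdet
  -- H d = d
  have hHd : H *ᵥ d = d := by
    rw [hdw, hH, mulVec_mulVec]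
    have hX : Xt * (Xtᵀ * Xt)⁻¹ * Xtᵀ * Xt = Xt := by
      rw [Matrix.mul_assoc, Matrix.mul_assoc, hinvM, Matrix.mul_one]
    rw [hX]
  -- compute H d
  set c : ℝ := (1 - ω) * e k with hc
  have hcol : ∀ i, d i = c * H i k := by
    intro i
    have hHik : H i k = ∑ q, (Xt * (Xtᵀ * Xt)⁻¹) i q * Xt k q := by
      rw [hH, mul_apply]
      exact Finset.sum_congr rfl fun q _ => by rw [transpose_apply]
    have h1 : (H *ᵥ d) i = ∑ q, (Xt * (Xtᵀ * Xt)⁻¹) i q * (c * Xt k q) := by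
      rw [hH, ← mulVec_mulVec, hXtdv]
      simp only [mulVec, dotProduct]
    rw [← hHd]
    rw [h1, hHik, Finset.mul_sum]
    exact Finset.sum_congr rfl fun q _ => by ring
  -- conclude
  intro i
  have hdk := hcol k
  have hek : e k * (1 - (1 - ω) * H k k) = y k - yhat k := by
    have : d k = e k - u k := hed k
    simp only [hu] at this
    have h2 : e k - (y k - yhat k) = c * H k k := by rw [← this, hdk]
    rw [hc] at h2; ring_nf; ring_nf at h2; linarith
  have hci : c = ξ * (y k - yhat k) := by
    rw [hξ, ← hek, hc]
    field_simp
  have := hcol i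
  simp only [hd] at this
  rw [hci] at this
  linarith [this]
end

section
/- Under the stated conditions, for every j ∉ A the j-th coordinate of d^ω(β₀^ω, β^ω) satisfies d_j^ω = d̂_j − ξ^ω (X_jᵀ h_{·k} − x_{kj})(y_k − ŷ_k), where X_j is the j-th column of X, x_{kj} the j-th coordinate of x_k, and d̂_j = −X_jᵀ(y − ŷ). -/
open Matrix

/-- Case-weight adjusted Lasso gradient on inactive coordinates:
`d_j^ω = d̂_j - ξ^ω (X_jᵀ h_{·k} - x_{kj})(y_k - ŷ_k)` for `j ∉ A`. -/
theorem stmt10 {n p : ℕ} (hn : 0 < n) (hp : 0 < p)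
    (X : Matrix (Fin n) (Fin p) ℝ) (y : Fin n → ℝ)
    (lam : ℝ) (hlam : 0 < lam) (k : Fin n) (ω : ℝ) (hω : ω ∈ Set.Icc (0:ℝ) 1)
    (hcent : ∀ j, ∑ i, X i j = 0)
    (A : Finset (Fin p))
    (XA : Matrix (Fin n) {j // j ∈ A} ℝ)
    (hXA : ∀ i (j : {j // j ∈ A}), XA i j = X i j.1)
    (hinv : IsUnit (XAᵀ * XA).det)
    (sA : {j // j ∈ A} → ℝ) (hsA : ∀ j, sA j = 1 ∨ sA j = -1)
    (betahat : {j // j ∈ A} → ℝ)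
    (hbetahat : betahat = (XAᵀ * XA)⁻¹.mulVec (XAᵀ.mulVec y - lam • sA))
    (beta0hat : ℝ) (hbeta0hat : beta0hat = (∑ i, y i) / n)
    (yhat : Fin n → ℝ) (hyhat : ∀ i, yhat i = beta0hat + ∑ j, XA i j * betahat j)
    (Xt : Matrix (Fin n) (Fin 1 ⊕ {j // j ∈ A}) ℝ)
    (hXt : Xt = Matrix.fromCols (Matrix.of fun _ (_ : Fin 1) => (1:ℝ)) XA)
    (H : Matrix (Fin n) (Fin n) ℝ) (hH : H = Xt * (Xtᵀ * Xt)⁻¹ * Xtᵀ)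
    (hden : 1 - (1 - ω) * H k k ≠ 0) (hnω : (n : ℝ) - 1 + ω ≠ 0)
    (ξ : ℝ) (hξ : ξ = (1 - ω) / (1 - (1 - ω) * H k k))
    (β0ω : ℝ) (βω : Fin p → ℝ)
    (hzero : ∀ j ∉ A, βω j = 0)
    (hd0 : -(∑ i, (y i - β0ω - ∑ j, X i j * βω j))
        + (1 - ω) * (y k - β0ω - ∑ j, X k j * βω j) = 0)
    (hdA : ∀ j : {j // j ∈ A},
        -(∑ i, X i j.1 * (y i - β0ω - ∑ j', X i j' * βω j'))
          + (1 - ω) * X k j.1 * (y k - β0ω - ∑ j', X k j' * βω j') = -lam * sA j) :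
    ∀ j ∉ A,
      -(∑ i, X i j * (y i - β0ω - ∑ j', X i j' * βω j'))
          + (1 - ω) * X k j * (y k - β0ω - ∑ j', X k j' * βω j')
        = -(∑ i, X i j * (y i - yhat i))
            - ξ * ((∑ i, X i j * H i k) - X k j) * (y k - yhat k) := by
  classical
  intro j hj
  have hn' : (n : ℝ) ≠ 0 := Nat.cast_ne_zero.mpr hn.ne'
  -- restrict sums over Fin p to A
  have hsum_restrict : ∀ i : Fin n,
      ∑ j' : Fin p, X i j' * βω j' = ∑ j' : {j // j ∈ A}, X i j'.1 * βω j'.1 := by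
    intro i
    rw [Finset.sum_coe_sort A (fun j' => X i j' * βω j')]
    exact (Finset.sum_subset (Finset.subset_univ A)
      (fun x _ hx => by rw [hzero x hx, mul_zero])).symm
  -- column sums of XA vanish
  have hXAcol : ∀ j' : {j // j ∈ A}, ∑ i, XA i j' = 0 := by
    intro j'
    simp only [hXA]
    exact hcent j'.1
  -- sum of fitted values equals sum of y
  have hyhat_sum : ∑ i, yhat i = ∑ i, y i := by
    have h1 : ∑ i, yhat i
        = (n : ℝ) * beta0hat + ∑ j' : {j // j ∈ A}, (∑ i, XA i j') * betahat j' := by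
      calc ∑ i, yhat i = ∑ i, (beta0hat + ∑ j', XA i j' * betahat j') := by
            exact Finset.sum_congr rfl fun i _ => hyhat i
        _ = (∑ i : Fin n, beta0hat) + ∑ i, ∑ j' : {j // j ∈ A}, XA i j' * betahat j' := by
            rw [Finset.sum_add_distrib]
        _ = (n : ℝ) * beta0hat + ∑ j' : {j // j ∈ A}, ∑ i, XA i j' * betahat j' := by
            rw [Finset.sum_comm]
            simp [Finset.sum_const, Finset.card_univ, mul_comm]
        _ = (n : ℝ) * beta0hat + ∑ j' : {j // j ∈ A}, (∑ i, XA i j') * betahat j' := by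
            congr 1
            exact Finset.sum_congr rfl fun j' _ => (Finset.sum_mul _ _ _).symm
    rw [h1, hbeta0hat]
    simp only [hXAcol, zero_mul, Finset.sum_const_zero, add_zero]
    field_simp
  have hsum_e : ∑ i, (y i - yhat i) = 0 := by
    rw [Finset.sum_sub_distrib, hyhat_sum, sub_self]
  have hsum_r : ∑ i, (y i - β0ω - ∑ j', X i j' * βω j')
      = (1 - ω) * (y k - β0ω - ∑ j', X k j' * βω j') := by linarith [hd0]
  -- normal equations for betahat
  have hnorm : (XAᵀ * XA) *ᵥ betahat = XAᵀ *ᵥ y - lam • sA := by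
    rw [hbetahat, Matrix.mulVec_mulVec, Matrix.mul_nonsing_inv _ hinv, Matrix.one_mulVec]
  have hXe : ∀ j' : {j // j ∈ A}, ∑ i, X i j'.1 * (y i - yhat i) = lam * sA j' := by
    intro j'
    have h1 : ((XAᵀ * XA) *ᵥ betahat) j' = (∑ i, X i j'.1 * y i) - lam * sA j' := by
      rw [hnorm]
      simp [Matrix.mulVec, dotProduct, Matrix.transpose_apply, hXA, mul_comm]
    have h3 : ∑ i, X i j'.1 * ∑ j2 : {j // j ∈ A}, XA i j2 * betahat j2
        = ((XAᵀ * XA) *ᵥ betahat) j' := by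
      calc ∑ i, X i j'.1 * ∑ j2 : {j // j ∈ A}, XA i j2 * betahat j2
          = ∑ i, ∑ j2 : {j // j ∈ A}, X i j'.1 * XA i j2 * betahat j2 := by
            refine Finset.sum_congr rfl fun i _ => ?_
            rw [Finset.mul_sum]
            exact Finset.sum_congr rfl fun j2 _ => by ring
        _ = ∑ j2 : {j // j ∈ A}, ∑ i, X i j'.1 * XA i j2 * betahat j2 := Finset.sum_comm
        _ = ((XAᵀ * XA) *ᵥ betahat) j' := by
            simp only [Matrix.mulVec, dotProduct, Matrix.mul_apply,
              Matrix.transpose_apply, hXA, Finset.sum_mul]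
    have h4 : ∑ i, X i j'.1 * (y i - yhat i)
        = ∑ i, (X i j'.1 * y i - X i j'.1 * beta0hat
              - X i j'.1 * ∑ j2 : {j // j ∈ A}, XA i j2 * betahat j2) := by
      refine Finset.sum_congr rfl fun i _ => ?_
      rw [hyhat i]
      ring
    have h5 : ∑ i, X i j'.1 * beta0hat = 0 := by
      rw [← Finset.sum_mul, hcent j'.1, zero_mul]
    rw [h4, Finset.sum_sub_distrib, Finset.sum_sub_distrib, h5, h3, h1]
    ring
  have hXr : ∀ j' : {j // j ∈ A},
      ∑ i, X i j'.1 * (y i - β0ω - ∑ j2, X i j2 * βω j2)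
        = lam * sA j' + (1 - ω) * X k j'.1 * (y k - β0ω - ∑ j2, X k j2 * βω j2) := by
    intro j'
    have := hdA j'
    linarith [this]
  -- invertibility of Xtᵀ * Xt
  have hM : Xtᵀ * Xt
      = Matrix.fromBlocks ((n : ℝ) • (1 : Matrix (Fin 1) (Fin 1) ℝ)) 0 0 (XAᵀ * XA) := by
    ext a b
    cases a with
    | inl a =>
      cases b with
      | inl b =>
        simp [Matrix.mul_apply, hXt, Matrix.fromCols, Subsingleton.elim a b,
          Finset.card_univ, Matrix.one_apply]
      | inr b =>
        simp [Matrix.mul_apply, hXt, Matrix.fromCols, hXA, hcent b.1]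
    | inr a =>
      cases b with
      | inl b =>
        simp [Matrix.mul_apply, hXt, Matrix.fromCols, hXA, hcent a.1]
      | inr b =>
        simp [Matrix.mul_apply, hXt, Matrix.fromCols]
  have hMunit : IsUnit (Xtᵀ * Xt).det := by
    rw [hM, Matrix.det_fromBlocks_zero₂₁]
    refine IsUnit.mul ?_ hinv
    have : ((n : ℝ) • (1 : Matrix (Fin 1) (Fin 1) ℝ)).det = (n : ℝ) := by
      simp [Matrix.det_fin_one]
    rw [this]
    exact isUnit_iff_ne_zero.mpr hn'
  have hHXt : H * Xt = Xt := by
    rw [hH]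
    calc Xt * (Xtᵀ * Xt)⁻¹ * Xtᵀ * Xt
        = Xt * ((Xtᵀ * Xt)⁻¹ * (Xtᵀ * Xt)) := by
          rw [Matrix.mul_assoc, Matrix.mul_assoc]
      _ = Xt := by rw [Matrix.nonsing_inv_mul _ hMunit, Matrix.mul_one]
  -- the difference vector
  set D : Fin n → ℝ :=
    fun i => (y i - β0ω - ∑ j', X i j' * βω j') - (y i - yhat i) with hD
  set c : (Fin 1 ⊕ {j // j ∈ A}) → ℝ :=
    Sum.elim (fun _ => beta0hat - β0ω) (fun j' => betahat j' - βω j'.1) with hc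
  have hδXt : D = Xt *ᵥ c := by
    funext i
    simp only [hD, hc, Matrix.mulVec, dotProduct, Fintype.sum_sum_type,
      hXt, Matrix.fromCols, Matrix.of_apply, Sum.elim_inl, Sum.elim_inr, one_mul,
      Finset.sum_const, Finset.card_univ, Fintype.card_fin, one_smul]
    rw [hyhat i, hsum_restrict i]
    simp only [mul_sub, Finset.sum_sub_distrib, hXA]
    ring
  set t : ℝ := (1 - ω) * (y k - β0ω - ∑ j', X k j' * βω j') with ht
  have hXtD : Xtᵀ *ᵥ D = t • fun b => Xt k b := by
    funext b
    cases b with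
    | inl a =>
      have hL : (Xtᵀ *ᵥ D) (Sum.inl a) = ∑ i, D i := by
        simp [Matrix.mulVec, dotProduct, Matrix.transpose_apply, hXt,
          Matrix.fromCols]
      have hsumD : ∑ i, D i = t := by
        simp only [hD]
        rw [Finset.sum_sub_distrib, hsum_r, hsum_e, ht, sub_zero]
      rw [hL, hsumD]
      simp [hXt, Matrix.fromCols]
    | inr j' =>
      have hL : (Xtᵀ *ᵥ D) (Sum.inr j') = ∑ i, X i j'.1 * D i := by
        simp [Matrix.mulVec, dotProduct, Matrix.transpose_apply, hXt,
          Matrix.fromCols, hXA]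
      have hsumD : ∑ i, X i j'.1 * D i = t * X k j'.1 := by
        have hstep : ∀ i, X i j'.1 * D i
            = X i j'.1 * (y i - β0ω - ∑ j2, X i j2 * βω j2)
              - X i j'.1 * (y i - yhat i) := by
          intro i
          simp only [hD]
          ring
        rw [Finset.sum_congr rfl fun i _ => hstep i, Finset.sum_sub_distrib,
          hXr j', hXe j', ht]
        ring
      rw [hL, hsumD]
      simp [hXt, Matrix.fromCols, hXA]
  have hHcol : (Xt * (Xtᵀ * Xt)⁻¹) *ᵥ (fun b => Xt k b) = fun i => H i k := by
    funext i
    rw [hH, Matrix.mul_apply]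
    simp [Matrix.mulVec, dotProduct, Matrix.transpose_apply]
  have hδeq : D = t • fun i => H i k := by
    calc D = (H * Xt) *ᵥ c := by rw [hHXt, ← hδXt]
      _ = H *ᵥ D := by rw [← Matrix.mulVec_mulVec, ← hδXt]
      _ = (Xt * (Xtᵀ * Xt)⁻¹) *ᵥ (Xtᵀ *ᵥ D) := by
          rw [hH, Matrix.mulVec_mulVec, Matrix.mul_assoc]
      _ = (Xt * (Xtᵀ * Xt)⁻¹) *ᵥ (t • fun b => Xt k b) := by rw [hXtD]
      _ = t • (Xt * (Xtᵀ * Xt)⁻¹) *ᵥ (fun b => Xt k b) := by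
          rw [Matrix.mulVec_smul]
      _ = t • fun i => H i k := by rw [hHcol]
  have key : ∀ i, (y i - β0ω - ∑ j', X i j' * βω j')
      = (y i - yhat i) + t * H i k := by
    intro i
    have h := congrFun hδeq i
    simp only [hD, Pi.smul_apply, smul_eq_mul] at h
    linarith [h]
  -- t = ξ * (y k - yhat k)
  have hrk_eq : t = ξ * (y k - yhat k) := by
    have hk := key k
    have h2 : (y k - β0ω - ∑ j', X k j' * βω j') * (1 - (1 - ω) * H k k)
        = y k - yhat k := by
      rw [ht] at hk
      ring_nf
      ring_nf at hk
      linear_combination hk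
    rw [hξ, ← h2, ht]
    field_simp
  -- final assembly
  have hsum : ∑ i, X i j * (y i - β0ω - ∑ j', X i j' * βω j')
      = ∑ i, X i j * (y i - yhat i) + ξ * (y k - yhat k) * ∑ i, X i j * H i k := by
    calc ∑ i, X i j * (y i - β0ω - ∑ j', X i j' * βω j')
        = ∑ i, (X i j * (y i - yhat i) + ξ * (y k - yhat k) * (X i j * H i k)) := by
          refine Finset.sum_congr rfl fun i _ => ?_
          rw [key i, ← hrk_eq]
          ring
      _ = _ := by rw [Finset.sum_add_distrib, ← Finset.mul_sum]
  have hrk2 : (1 - ω) * (y k - β0ω - ∑ j', X k j' * βω j') = ξ * (y k - yhat k) := by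
    rw [← ht]; exact hrk_eq
  linear_combination (-1 : ℝ) * hsum + X k j * hrk2
end

section
/- Under the stated conditions, the k-th residual of the case-weight adjusted fit ŷ^ω := β₀^ω 1ₙ + X β^ω satisfies y_k − ŷ_k^ω = (y_k − ŷ_k)/(1 − (1−ω)h_kk). -/
open Matrix

/-- Case-weight adjusted residual for case `k`:
`y_k - ŷ_k^ω = (y_k - ŷ_k)/(1-(1-ω)h_kk)`. -/
theorem stmt11 {n p : ℕ} (hn : 0 < n) (hp : 0 < p)
    (X : Matrix (Fin n) (Fin p) ℝ) (y : Fin n → ℝ)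
    (lam : ℝ) (hlam : 0 < lam) (k : Fin n) (ω : ℝ) (hω : ω ∈ Set.Icc (0:ℝ) 1)
    (hcent : ∀ j, ∑ i, X i j = 0)
    (A : Finset (Fin p))
    (XA : Matrix (Fin n) {j // j ∈ A} ℝ)
    (hXA : ∀ i (j : {j // j ∈ A}), XA i j = X i j.1)
    (hinv : IsUnit (XAᵀ * XA).det)
    (sA : {j // j ∈ A} → ℝ) (hsA : ∀ j, sA j = 1 ∨ sA j = -1)
    (betahat : {j // j ∈ A} → ℝ)
    (hbetahat : betahat = (XAᵀ * XA)⁻¹.mulVec (XAᵀ.mulVec y - lam • sA))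
    (beta0hat : ℝ) (hbeta0hat : beta0hat = (∑ i, y i) / n)
    (yhat : Fin n → ℝ) (hyhat : ∀ i, yhat i = beta0hat + ∑ j, XA i j * betahat j)
    (Xt : Matrix (Fin n) (Fin 1 ⊕ {j // j ∈ A}) ℝ)
    (hXt : Xt = Matrix.fromCols (Matrix.of fun _ (_ : Fin 1) => (1:ℝ)) XA)
    (H : Matrix (Fin n) (Fin n) ℝ) (hH : H = Xt * (Xtᵀ * Xt)⁻¹ * Xtᵀ)
    (hden : 1 - (1 - ω) * H k k ≠ 0) (hnω : (n : ℝ) - 1 + ω ≠ 0)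
    (ξ : ℝ) (hξ : ξ = (1 - ω) / (1 - (1 - ω) * H k k))
    (β0ω : ℝ) (βω : Fin p → ℝ)
    (hzero : ∀ j ∉ A, βω j = 0)
    (hd0 : -(∑ i, (y i - β0ω - ∑ j, X i j * βω j))
        + (1 - ω) * (y k - β0ω - ∑ j, X k j * βω j) = 0)
    (hdA : ∀ j : {j // j ∈ A},
        -(∑ i, X i j.1 * (y i - β0ω - ∑ j', X i j' * βω j'))
          + (1 - ω) * X k j.1 * (y k - β0ω - ∑ j', X k j' * βω j') = -lam * sA j) :
    y k - (β0ω + ∑ j, X k j * βω j) = (y k - yhat k) / (1 - (1 - ω) * H k k) := by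
  have hn' : (n:ℝ) ≠ 0 := Nat.cast_ne_zero.mpr hn.ne'
  set G : Matrix {j // j ∈ A} {j // j ∈ A} ℝ := XAᵀ * XA with hG
  set bω : {j // j ∈ A} → ℝ := fun j => βω j.1 with hbωdef
  set xk : {j // j ∈ A} → ℝ := fun j => XA k j with hxk
  set r : ℝ := y k - β0ω - ∑ j, X k j * βω j with hr
  have hcentA : ∀ j : {j // j ∈ A}, ∑ i, XA i j = 0 := by
    intro j; simp only [hXA]; exact hcent j.1
  -- restrict sums to A
  have hsum : ∀ i, (∑ j, X i j * βω j) = ∑ j : {j // j ∈ A}, XA i j * bω j := by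
    intro i
    calc ∑ j, X i j * βω j = ∑ j ∈ A, X i j * βω j :=
          (Finset.sum_subset A.subset_univ (fun j _ hj => by rw [hzero j hj, mul_zero])).symm
      _ = ∑ j : {j // j ∈ A}, X i j.1 * βω j.1 := (Finset.sum_coe_sort A _).symm
      _ = ∑ j : {j // j ∈ A}, XA i j * bω j := by simp [hXA, hbωdef]
  have hGinv : G * G⁻¹ = 1 := Matrix.mul_nonsing_inv G hinv
  have hinvG : G⁻¹ * G = 1 := Matrix.nonsing_inv_mul G hinv
  -- the intercept equation
  have hβ0 : β0ω = beta0hat - (1 - ω) * r / n := by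
    have h1 : ∑ i, (y i - β0ω - ∑ j, X i j * βω j)
        = (∑ i, y i) - n * β0ω - ∑ j : {j // j ∈ A}, (∑ i, XA i j) * bω j := by
      rw [Finset.sum_sub_distrib, Finset.sum_sub_distrib]
      congr 1
      · simp [mul_comm]
      · simp only [hsum]
        rw [Finset.sum_comm]
        simp [Finset.sum_mul]
    rw [h1] at hd0
    simp only [hcentA, zero_mul, Finset.sum_const_zero] at hd0
    rw [hbeta0hat]
    field_simp
    linarith [hd0]
  -- the A-coordinate equations, in vector form
  have hGb : G.mulVec bω = XAᵀ.mulVec y - lam • sA - ((1 - ω) * r) • xk := by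
    funext j
    have h := hdA j
    have e1 : ∑ i, X i j.1 * (y i - β0ω - ∑ j', X i j' * βω j')
        = (XAᵀ.mulVec y) j - β0ω * (∑ i, XA i j) - (G.mulVec bω) j := by
      have expand : ∀ i, X i j.1 * (y i - β0ω - ∑ j', X i j' * βω j')
          = XA i j * y i - β0ω * XA i j - XA i j * ∑ j', X i j' * βω j' := by
        intro i; rw [hXA]; ring
      rw [Finset.sum_congr rfl (fun i _ => expand i), Finset.sum_sub_distrib,
        Finset.sum_sub_distrib]
      congr 1
      · congr 1
        rw [Finset.mul_sum]
      · simp only [hsum]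
        rw [hG, Matrix.mulVec, dotProduct]
        simp only [Matrix.mul_apply, Matrix.transpose_apply]
        calc ∑ i, XA i j * ∑ j' : {j // j ∈ A}, XA i j' * bω j'
            = ∑ i, ∑ j' : {j // j ∈ A}, XA i j * (XA i j' * bω j') := by
              simp [Finset.mul_sum]
          _ = ∑ j' : {j // j ∈ A}, ∑ i, XA i j * (XA i j' * bω j') := Finset.sum_comm
          _ = ∑ j' : {j // j ∈ A}, (∑ i, XA i j * XA i j') * bω j' := by
              refine Finset.sum_congr rfl fun j' _ => ?_
              rw [Finset.sum_mul]
              refine Finset.sum_congr rfl fun i _ => ?_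
              ring
    rw [e1, hcentA, mul_zero, sub_zero] at h
    have hXkj : X k j.1 = xk j := (hXA k j).symm
    rw [hXkj] at h
    simp only [Pi.sub_apply, Pi.smul_apply, smul_eq_mul]
    linear_combination h
  -- solve for bω
  have hbω : bω = betahat - ((1 - ω) * r) • G⁻¹.mulVec xk := by
    have h1 : G⁻¹.mulVec (G.mulVec bω) = bω := by
      rw [Matrix.mulVec_mulVec, hinvG, Matrix.one_mulVec]
    rw [hGb] at h1
    rw [← h1, Matrix.mulVec_sub, Matrix.mulVec_smul, hbetahat]
  set q : ℝ := ∑ j : {j // j ∈ A}, xk j * (G⁻¹.mulVec xk) j with hq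
  -- the quadratic form equals H k k - 1/n
  have hM : Xtᵀ * Xt = Matrix.fromBlocks ((n:ℝ) • 1) 0 0 G := by
    rw [hXt, Matrix.transpose_fromCols, Matrix.fromRows_mul_fromCols]
    ext i j
    rcases i with i | i <;> rcases j with j | j
    · have hij : i = j := Subsingleton.elim i j
      subst hij
      simp [Matrix.mul_apply, Matrix.one_apply]
    · simp [Matrix.mul_apply, hcentA]
    · simp [Matrix.mul_apply, hcentA]
    · simp [hG]
  have hMinv : (Xtᵀ * Xt)⁻¹ = Matrix.fromBlocks ((n:ℝ)⁻¹ • 1) 0 0 G⁻¹ := by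
    apply Matrix.inv_eq_right_inv
    rw [hM, Matrix.fromBlocks_multiply]
    simp [smul_smul, hn', hGinv, Matrix.fromBlocks_one]
  have hHkk : H k k = (n:ℝ)⁻¹ + q := by
    rw [hH, hMinv]
    simp only [Matrix.mul_apply, Fintype.sum_sum_type, Matrix.transpose_apply]
    rw [hXt]
    simp only [Matrix.fromCols_apply_inl, Matrix.fromCols_apply_inr,
      Matrix.fromBlocks_apply₁₁, Matrix.fromBlocks_apply₁₂, Matrix.fromBlocks_apply₂₁,
      Matrix.fromBlocks_apply₂₂, Matrix.of_apply]
    have h0 : ∀ a b : Fin 1, ((n:ℝ)⁻¹ • (1 : Matrix (Fin 1) (Fin 1) ℝ)) a b = (n:ℝ)⁻¹ := by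
      intro a b
      fin_cases a; fin_cases b; simp
    simp only [h0, Matrix.zero_apply, mul_zero, zero_mul, mul_one, one_mul,
      Finset.sum_const_zero, add_zero, zero_add]
    have : ∀ j : {j // j ∈ A},
        (∑ a : Fin 1, (n:ℝ)⁻¹ + ∑ a : {j // j ∈ A}, XA k a * 0) = (n:ℝ)⁻¹ := by
      intro j; simp
    congr 1
    · simp
    · rw [hq]
      calc ∑ x : {j // j ∈ A}, (∑ x1 : {j // j ∈ A}, XA k x1 * G⁻¹ x1 x) * XA k x
          = ∑ x : {j // j ∈ A}, ∑ x1 : {j // j ∈ A}, XA k x1 * G⁻¹ x1 x * XA k x := by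
            simp [Finset.sum_mul]
        _ = ∑ x1 : {j // j ∈ A}, ∑ x : {j // j ∈ A}, XA k x1 * G⁻¹ x1 x * XA k x :=
            Finset.sum_comm
        _ = ∑ j : {j // j ∈ A}, xk j * (G⁻¹.mulVec xk) j := by
            refine Finset.sum_congr rfl fun j _ => ?_
            simp only [Matrix.mulVec, dotProduct, hxk, Finset.mul_sum]
            exact Finset.sum_congr rfl fun j' _ => by ring
  -- assemble
  have hbωk : ∑ j : {j // j ∈ A}, XA k j * bω j
      = (∑ j : {j // j ∈ A}, XA k j * betahat j) - (1 - ω) * r * q := by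
    rw [hbω, hq]
    rw [Finset.mul_sum]
    rw [← Finset.sum_sub_distrib]
    refine Finset.sum_congr rfl fun j _ => ?_
    simp only [Pi.sub_apply, Pi.smul_apply, smul_eq_mul, hxk]
    ring
  have hrexp : r = y k - beta0hat + (1 - ω) * r / n
      - (∑ j : {j // j ∈ A}, XA k j * betahat j) + (1 - ω) * r * q := by
    have : r = y k - β0ω - ∑ j : {j // j ∈ A}, XA k j * bω j := by
      rw [hr, hsum k]
    linear_combination this - hβ0 - hbωk
  have hkey : r * (1 - (1 - ω) * H k k) = y k - yhat k := by
    rw [hHkk, hyhat k]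
    linear_combination hrexp
  rw [eq_div_iff hden, show y k - (β0ω + ∑ j, X k j * βω j) = r from by rw [hr]; ring]
  exact hkey
end

section
/- Let H ∈ ℝ^{n×n} be symmetric and idempotent with h_kk := H_kk ∈ [0,1), let r ∈ ℝ, s > 0, and p a positive integer. Define ξ(ω) = (1−ω)/(1−(1−ω)h_kk) and D(ω) = (1/((p+1)s²)) ‖ξ(ω) H e_k r‖² for ω near 1. Then D is twice differentiable at ω = 1 and (1/2) D″(1) = (1/((p+1)s²)) h_kk r². In particular, the local influence of case k in the Lasso, defined as (1/2) ∂²D_k(λ,ω)/∂ω² at ω = 1, equals h_kk (y_k − ŷ_k)²/((p+1)s²) with r = y_k − ŷ_k. -/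
/-- Local influence of case `k` in the Lasso: with `H` symmetric idempotent,
`ξ(ω) = (1-ω)/(1-(1-ω)H_kk)` and
`D(ω) = (1/((p+1)s²)) ‖ξ(ω) H e_k r‖²`, the function `D` is twice differentiable at
`ω = 1` and `(1/2) D″(1) = H_kk r² / ((p+1)s²)`. -/
theorem stmt14 {n : ℕ} (H : Matrix (Fin n) (Fin n) ℝ)
    (hsymm : H.IsSymm) (hidem : H * H = H) (k : Fin n)
    (hkk : H k k ∈ Set.Ico (0:ℝ) 1)
    (r s : ℝ) (hs : 0 < s) (p : ℕ) (hp : 0 < p)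
    (ξ D : ℝ → ℝ)
    (hξ : ∀ ω, ξ ω = (1 - ω) / (1 - (1 - ω) * H k k))
    (hD : ∀ ω, D ω = (1 / (((p : ℝ) + 1) * s ^ 2)) * ∑ i, (ξ ω * H i k * r) ^ 2) :
    HasDerivAt (deriv D) (2 * ((1 / (((p : ℝ) + 1) * s ^ 2)) * H k k * r ^ 2)) 1 ∧
      (1 / 2) * deriv (deriv D) 1 = (1 / (((p : ℝ) + 1) * s ^ 2)) * H k k * r ^ 2 := by
  set h : ℝ := H k k with hh
  set c : ℝ := (1 / (((p : ℝ) + 1) * s ^ 2)) * h * r ^ 2 with hc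
  -- sum of squares of column k equals h
  have hsum : (∑ i, (H i k) ^ 2) = h := by
    have h1 : (H * H) k k = h := by rw [hidem]
    rw [Matrix.mul_apply] at h1
    rw [← h1]
    refine Finset.sum_congr rfl fun i _ => ?_
    have : H k i = H i k := by
      conv_lhs => rw [← hsymm]
      rfl
    rw [this]; ring
  -- explicit formula for D
  have hDf : ∀ ω, D ω = c * ((1 - ω) / (1 - (1 - ω) * h)) ^ 2 := by
    intro ω
    rw [hD, hξ]
    have : (∑ i, (((1 - ω) / (1 - (1 - ω) * h)) * H i k * r) ^ 2)
        = (((1 - ω) / (1 - (1 - ω) * h)) ^ 2 * r ^ 2) * ∑ i, (H i k) ^ 2 := by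
      rw [Finset.mul_sum]
      refine Finset.sum_congr rfl fun i _ => ?_
      ring
    rw [this, hsum, hc]; ring
  -- derivative formula near points where the denominator is nonzero
  have hq : ∀ ω : ℝ, HasDerivAt (fun ω => 1 - (1 - ω) * h) h ω := by
    intro ω
    have := (((hasDerivAt_id ω).const_sub 1).mul_const h).const_sub 1
    simpa using this
  have hderivD : ∀ ω : ℝ, (1 - (1 - ω) * h) ≠ 0 →
      HasDerivAt D (-2 * c * (1 - ω) / (1 - (1 - ω) * h) ^ 3) ω := by
    intro ω hne
    have h1 : HasDerivAt (fun ω : ℝ => 1 - ω) (-1) ω := by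
      simpa using (hasDerivAt_id ω).const_sub 1
    have hdiv := h1.fun_div (hq ω) hne
    have hpow := (hdiv.fun_pow 2).const_mul c
    have heq : (fun ω => c * ((1 - ω) / (1 - (1 - ω) * h)) ^ 2) = D := by
      funext ω; rw [hDf ω]
    rw [heq] at hpow
    refine hpow.congr_deriv ?_
    norm_num
    field_simp
  -- deriv D agrees with the explicit formula near 1
  have hcont : ContinuousAt (fun ω : ℝ => 1 - (1 - ω) * h) 1 := (hq 1).continuousAt
  have hq1 : (1 - (1 - (1:ℝ)) * h) = 1 := by ring
  have hnean : ∀ᶠ ω in nhds (1:ℝ), (1 - (1 - ω) * h) ≠ 0 := by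
    have : (fun ω : ℝ => 1 - (1 - ω) * h) 1 ≠ 0 := by simpa [hq1]
    exact hcont.eventually_ne this
  have hEq : deriv D =ᶠ[nhds (1:ℝ)] fun ω => -2 * c * (1 - ω) / (1 - (1 - ω) * h) ^ 3 := by
    filter_upwards [hnean] with ω hne
    exact (hderivD ω hne).deriv
  -- derivative of the explicit formula at 1
  have hd : HasDerivAt (fun ω => -2 * c * (1 - ω) / (1 - (1 - ω) * h) ^ 3) (2 * c) 1 := by
    have h1 : HasDerivAt (fun ω : ℝ => -2 * c * (1 - ω)) (2 * c) 1 := by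
      have := ((hasDerivAt_id (1:ℝ)).const_sub 1).const_mul (-2 * c)
      simpa using this
    have h2 : HasDerivAt (fun ω : ℝ => (1 - (1 - ω) * h) ^ 3) (3 * (1 - (1 - (1:ℝ)) * h) ^ 2 * h) 1 := by
      simpa [mul_comm] using (hq 1).fun_pow 3
    have hne : ((1 : ℝ) - (1 - (1:ℝ)) * h) ^ 3 ≠ 0 := by rw [hq1]; norm_num
    have := h1.fun_div h2 hne
    refine this.congr_deriv ?_
    rw [hq1]
    ring
  have hmain : HasDerivAt (deriv D) (2 * c) 1 := hd.congr_of_eventuallyEq hEq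
  refine ⟨by simpa [hc, mul_assoc] using hmain, ?_⟩
  rw [hmain.deriv]
  ring
end

section
/- Let H ∈ ℝ^{n×n} be symmetric and idempotent with H_kk ∈ [0,1), let a, c ∈ ℝⁿ, r ∈ ℝ, s > 0, p a positive integer, and let ξ(ω) = (1−ω)/(1−(1−ω)H_kk). Define D̃(t) = (1/((p+1)s²)) ‖a − t·H e_k r − c‖² for t ∈ ℝ. Then the function ω ↦ D̃′(ξ(ω)) is monotonically decreasing on any subinterval of [0,1]. (This is the statement that on each interval (ω_{m+1}, ω_m) between consecutive breakpoints of the case-weight adjusted Lasso path, where the active set and hence the hat matrix H, the base fitted vector a, and the residual factor r are constant, the derivative of the case influence function D_k(λ,ω) with respect to ξ^ω is monotonically decreasing in ω.) -/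
/-- Between breakpoints, the derivative of the case influence function with respect to
`ξ^ω` is monotonically decreasing in `ω`: with `D̃(t) = (1/((p+1)s²)) ‖a - t H e_k r - c‖²`
and `ξ(ω) = (1-ω)/(1-(1-ω)H_kk)`, the map `ω ↦ D̃′(ξ(ω))` is antitone on `[0,1]`. -/
theorem stmt15 {n : ℕ} (H : Matrix (Fin n) (Fin n) ℝ)
    (hsymm : H.IsSymm) (hidem : H * H = H) (k : Fin n)
    (hkk : H k k ∈ Set.Ico (0:ℝ) 1)
    (a c : Fin n → ℝ) (r s : ℝ) (hs : 0 < s) (p : ℕ) (hp : 0 < p)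
    (ξ : ℝ → ℝ) (hξ : ∀ ω, ξ ω = (1 - ω) / (1 - (1 - ω) * H k k))
    (Dt : ℝ → ℝ)
    (hDt : ∀ t, Dt t = (1 / (((p : ℝ) + 1) * s ^ 2)) * ∑ i, (a i - t * H i k * r - c i) ^ 2) :
    AntitoneOn (fun ω => deriv Dt (ξ ω)) (Set.Icc (0:ℝ) 1) := by
  obtain ⟨h0, h1⟩ := hkk
  set C : ℝ := ((p : ℝ) + 1) * s ^ 2 with hC
  have hCpos : 0 < C := by positivity
  -- derivative formula
  have hderiv : ∀ t : ℝ, HasDerivAt Dt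
      ((1 / C) * ∑ i, 2 * (a i - t * H i k * r - c i) ^ 1 * (-(H i k * r))) t := by
    intro t
    have : Dt = fun t => (1 / C) * ∑ i, (a i - t * H i k * r - c i) ^ 2 := funext hDt
    rw [this]
    refine HasDerivAt.const_mul _ ?_
    refine HasDerivAt.fun_sum fun i _ => ?_
    have hinner : HasDerivAt (fun t : ℝ => a i - t * H i k * r - c i) (-(H i k * r)) t := by
      have : HasDerivAt (fun t : ℝ => t * H i k * r) (H i k * r) t := by
        simpa using ((hasDerivAt_id t).mul_const (H i k)).mul_const r
      simpa using ((this.const_sub (a i)).sub_const (c i))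
    exact hinner.pow 2
  have hderiv' : ∀ t : ℝ, deriv Dt t
      = (1 / C) * (t * (∑ i, 2 * (H i k * r) ^ 2) + ∑ i, (-2 * (H i k * r) * (a i - c i))) := by
    intro t
    rw [(hderiv t).deriv]
    congr 1
    rw [Finset.mul_sum, ← Finset.sum_add_distrib]
    exact Finset.sum_congr rfl fun i _ => by ring
  -- deriv Dt is monotone
  have hmono : Monotone (deriv Dt) := by
    intro t₁ t₂ h12
    rw [hderiv' t₁, hderiv' t₂]
    have hsum : (0:ℝ) ≤ ∑ i, 2 * (H i k * r) ^ 2 :=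
      Finset.sum_nonneg fun i _ => by positivity
    have : t₁ * (∑ i, 2 * (H i k * r) ^ 2) ≤ t₂ * (∑ i, 2 * (H i k * r) ^ 2) :=
      mul_le_mul_of_nonneg_right h12 hsum
    have h1C : (0:ℝ) ≤ 1 / C := by positivity
    nlinarith
  -- ξ is antitone on [0,1]
  intro ω₁ hω₁ ω₂ hω₂ h12
  have hx : ξ ω₂ ≤ ξ ω₁ := by
    rw [hξ ω₁, hξ ω₂]
    have hd1 : 0 < 1 - (1 - ω₁) * H k k := by nlinarith [hω₁.1, hω₁.2]
    have hd2 : 0 < 1 - (1 - ω₂) * H k k := by nlinarith [hω₂.1, hω₂.2]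
    rw [div_le_div_iff₀ hd2 hd1]
    nlinarith [hω₁.1, hω₁.2, hω₂.1, hω₂.2]
  exact hmono hx
end
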